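/- For all real x, the function q(x) = φ(x)²/Φ(x)² + x·φ(x)/Φ(x), where φ and Φ are the standard Gaussian pdf and cdf, satisfies 0 < q(x) < 1. -/

import Mathlib

open MeasureTheory Set Filter Real Topology

/-- standard normal pdf -/
noncomputable def gaussPdf (x : ℝ) : ℝ :=
  (Real.sqrt (2 * Real.pi))⁻¹ * Real.exp (-x ^ 2 / 2)

/-- standard normal cdf -/
noncomputable def gaussCdf (x : ℝ) : ℝ := ∫ t in Set.Iic x, gaussPdf t

/-- negative derivative of the inverse Mills ratio -/
noncomputable def millsQ (x : ℝ) : ℝ :=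
  gaussPdf x ^ 2 / gaussCdf x ^ 2 + x * gaussPdf x / gaussCdf x

lemma gaussPdf_pos (x : ℝ) : 0 < gaussPdf x := by
  unfold gaussPdf
  have : 0 < Real.sqrt (2 * Real.pi) := Real.sqrt_pos.2 (by positivity)
  positivity

lemma continuous_gaussPdf : Continuous gaussPdf := by
  unfold gaussPdf; fun_prop

lemma gaussPdf_eq (x : ℝ) :
    gaussPdf x = (Real.sqrt (2 * Real.pi))⁻¹ * Real.exp (-(1/2) * x ^ 2) := by
  unfold gaussPdf; ring_nf

lemma integrable_gaussPdf : Integrable gaussPdf := by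
  have := (integrable_exp_neg_mul_sq (b := 1/2) (by norm_num)).const_mul
    (Real.sqrt (2 * Real.pi))⁻¹
  refine this.congr ?_
  filter_upwards with x
  rw [gaussPdf_eq]

lemma integrable_id_mul_gaussPdf : Integrable (fun t : ℝ => t * gaussPdf t) := by
  have := (integrable_mul_exp_neg_mul_sq (b := 1/2) (by norm_num)).const_mul
    (Real.sqrt (2 * Real.pi))⁻¹
  refine this.congr ?_
  filter_upwards with x
  rw [gaussPdf_eq]; ring

lemma hasDerivAt_gaussPdf (x : ℝ) : HasDerivAt gaussPdf (-x * gaussPdf x) x := by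
  have h : HasDerivAt (fun t : ℝ => -t ^ 2 / 2) (-x) x := by
    have := ((hasDerivAt_pow 2 x).neg).div_const 2
    refine this.congr_deriv ?_
    rw [show (2:ℕ) - 1 = 1 from rfl, pow_one]; push_cast; ring
  have := (h.exp).const_mul (Real.sqrt (2 * Real.pi))⁻¹
  refine HasDerivAt.congr_deriv (this.congr_of_eventuallyEq ?_) (by unfold gaussPdf; ring)
  filter_upwards with t
  unfold gaussPdf; ring

lemma tendsto_gaussPdf_atBot : Tendsto gaussPdf atBot (𝓝 0) := by
  have h2 : Tendsto (fun x : ℝ => -x ^ 2 / 2) atBot atBot := by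
    apply Tendsto.atBot_div_const (by norm_num)
    apply tendsto_neg_atTop_atBot.comp
    have : Tendsto (fun x : ℝ => x ^ 2) atTop atTop := tendsto_pow_atTop (by norm_num)
    exact (this.comp tendsto_neg_atBot_atTop).congr (by intro x; simp)
  have h3 := (Real.tendsto_exp_atBot.comp h2).const_mul (Real.sqrt (2 * Real.pi))⁻¹
  rw [mul_zero] at h3
  refine h3.congr fun x => ?_
  simp [Function.comp, gaussPdf]

lemma tendsto_id_mul_gaussPdf_atBot : Tendsto (fun x : ℝ => x * gaussPdf x) atBot (𝓝 0) := by
  have h0 : Tendsto (fun x : ℝ => x * Real.exp (-(1/2) * x ^ 2)) atTop (𝓝 0) := by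
    have h1 := rpow_mul_exp_neg_mul_sq_isLittleO_exp_neg (b := 1/2) (by norm_num) 1
    have h2 : Tendsto (fun x : ℝ => Real.exp (-(1/2) * x)) atTop (𝓝 0) :=
      Real.tendsto_exp_atBot.comp (Tendsto.const_mul_atTop_of_neg (by norm_num) tendsto_id)
    have h3 := h1.trans_tendsto h2
    refine h3.congr' ?_
    filter_upwards [eventually_gt_atTop (0:ℝ)] with x hx
    rw [Real.rpow_one]
  have h4 : Tendsto (fun x : ℝ => x * Real.exp (-(1/2) * x ^ 2)) atBot (𝓝 0) := by
    have := (h0.comp tendsto_neg_atBot_atTop).neg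
    rw [neg_zero] at this
    refine this.congr fun x => ?_
    simp only [Function.comp, neg_sq, neg_mul, neg_neg]
  have := h4.const_mul (Real.sqrt (2 * Real.pi))⁻¹
  rw [mul_zero] at this
  refine this.congr fun x => ?_
  rw [gaussPdf_eq]; ring

lemma integral_Iic_id_mul_gaussPdf (x : ℝ) :
    ∫ t in Iic x, t * gaussPdf t = -gaussPdf x := by
  have h := integral_Iic_of_hasDerivAt_of_tendsto' (a := x)
    (f := fun t => -gaussPdf t) (f' := fun t => t * gaussPdf t) (m := 0)
    (fun t _ => by
      have := (hasDerivAt_gaussPdf t).neg; simp only [neg_mul, neg_neg] at this; exact this)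
    integrable_id_mul_gaussPdf.integrableOn
    (by simpa using tendsto_gaussPdf_atBot.neg)
  simpa using h

lemma hasDerivAt_gaussCdf (x : ℝ) : HasDerivAt gaussCdf (gaussPdf x) x := by
  have heq : gaussCdf = fun u => gaussCdf 0 + ∫ t in (0:ℝ)..u, gaussPdf t := by
    funext u
    rw [← intervalIntegral.integral_Iic_sub_Iic integrable_gaussPdf.integrableOn
      integrable_gaussPdf.integrableOn]
    unfold gaussCdf
    ring
  rw [heq]
  exact (intervalIntegral.integral_hasDerivAt_right
    integrable_gaussPdf.intervalIntegrable
    (continuous_gaussPdf.stronglyMeasurableAtFilter _ _)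
    continuous_gaussPdf.continuousAt).const_add _

lemma integral_Iic_pos {f : ℝ → ℝ} {x : ℝ} (hf : IntegrableOn f (Iic x))
    (h0 : ∀ t, t ≤ x → 0 ≤ f t) (hpos : ∀ t, t < x → 0 < f t) :
    0 < ∫ t in Iic x, f t := by
  rw [setIntegral_pos_iff_support_of_nonneg_ae ?_ hf]
  · refine lt_of_lt_of_le ?_ (measure_mono (?_ : Iio x ⊆ _))
    · simp [Real.volume_Iio]
    · intro t ht
      exact ⟨(hpos t (mem_Iio.1 ht)).ne', mem_Iic.2 (mem_Iio.1 ht).le⟩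
  · rw [EventuallyLE, ae_restrict_iff' measurableSet_Iic]
    filter_upwards with t ht using h0 t ht

lemma gaussCdf_pos (x : ℝ) : 0 < gaussCdf x :=
  integral_Iic_pos integrable_gaussPdf.integrableOn
    (fun t _ => (gaussPdf_pos t).le) (fun t _ => gaussPdf_pos t)

lemma mills1 (x : ℝ) : 0 < gaussPdf x + x * gaussCdf x := by
  have key : gaussPdf x + x * gaussCdf x = ∫ t in Iic x, (x - t) * gaussPdf t := by
    have h2 : ∫ t in Iic x, (x - t) * gaussPdf t
        = (∫ t in Iic x, x * gaussPdf t) - ∫ t in Iic x, t * gaussPdf t := by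
      rw [← integral_sub (integrable_gaussPdf.integrableOn.const_mul x)
        integrable_id_mul_gaussPdf.integrableOn]
      congr 1; funext t; ring
    rw [h2, MeasureTheory.integral_const_mul, integral_Iic_id_mul_gaussPdf]
    unfold gaussCdf; ring
  rw [key]
  refine integral_Iic_pos ?_ (fun t ht => ?_) (fun t ht => ?_)
  · refine ((integrable_gaussPdf.integrableOn.const_mul x).sub
      integrable_id_mul_gaussPdf.integrableOn).congr ?_
    filter_upwards with t
    simp only [Pi.sub_apply]
    ring
  · have := gaussPdf_pos t; nlinarith
  · have := gaussPdf_pos t; nlinarith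

lemma hasDerivAt_aux (t : ℝ) :
    HasDerivAt (fun s => s * gaussPdf s / (1 + s ^ 2))
      (gaussPdf t * (1 - 2 * t ^ 2 - t ^ 4) / (1 + t ^ 2) ^ 2) t := by
  have hnum : HasDerivAt (fun s : ℝ => s * gaussPdf s)
      (1 * gaussPdf t + t * (-t * gaussPdf t)) t :=
    (hasDerivAt_id t).mul (hasDerivAt_gaussPdf t)
  have hden : HasDerivAt (fun s : ℝ => 1 + s ^ 2) (2 * t) t := by
    have := (hasDerivAt_pow 2 t).const_add 1
    simpa using this
  have h := hnum.div hden (by positivity)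
  refine h.congr_deriv ?_
  field_simp
  ring

lemma integrable_aux :
    Integrable (fun t : ℝ => gaussPdf t * (1 - 2 * t ^ 2 - t ^ 4) / (1 + t ^ 2) ^ 2) := by
  refine (integrable_gaussPdf.const_mul 3).mono' ?_ ?_
  · exact (continuous_gaussPdf.mul (by continuity)).div (by continuity)
      (fun t => by positivity) |>.aestronglyMeasurable
  · filter_upwards with t
    have hB : (0:ℝ) < (1 + t ^ 2) ^ 2 := by positivity
    have hφ := gaussPdf_pos t
    rw [Real.norm_eq_abs, abs_div, abs_mul, abs_of_pos hφ, abs_of_pos hB, div_le_iff₀ hB]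
    have habs : |1 - 2 * t ^ 2 - t ^ 4| ≤ 3 * (1 + t ^ 2) ^ 2 := by
      rw [abs_le]
      constructor <;> nlinarith [sq_nonneg t, sq_nonneg (t ^ 2), sq_nonneg (1 + t ^ 2)]
    nlinarith [abs_nonneg (1 - 2 * t ^ 2 - t ^ 4)]

lemma tendsto_aux : Tendsto (fun t : ℝ => t * gaussPdf t / (1 + t ^ 2)) atBot (𝓝 0) := by
  have h1 := tendsto_id_mul_gaussPdf_atBot
  have hsq : Tendsto (fun t : ℝ => t ^ 2) atBot atTop := by
    have h0 : Tendsto (fun t : ℝ => t ^ 2) atTop atTop := tendsto_pow_atTop (by norm_num)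
    have h1 : Tendsto (fun t : ℝ => -t) atBot atTop := tendsto_neg_atBot_atTop
    exact (h0.comp h1).congr fun t => by simp [Function.comp]
  have h2 : Tendsto (fun t : ℝ => (1 + t ^ 2)⁻¹) atBot (𝓝 0) :=
    tendsto_inv_atTop_zero.comp (tendsto_atTop_add_const_left atBot 1 hsq)
  have h3 := h1.mul h2
  rw [mul_zero] at h3
  exact h3.congr fun t => by rw [div_eq_mul_inv]

lemma mills2 (x : ℝ) : 0 < (1 + x ^ 2) * gaussCdf x + x * gaussPdf x := by
  have hint : (∫ t in Iic x, gaussPdf t * (1 - 2 * t ^ 2 - t ^ 4) / (1 + t ^ 2) ^ 2)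
      = x * gaussPdf x / (1 + x ^ 2) := by
    simpa using integral_Iic_of_hasDerivAt_of_tendsto' (fun t _ => hasDerivAt_aux t)
      integrable_aux.integrableOn tendsto_aux
  have key : gaussCdf x + x * gaussPdf x / (1 + x ^ 2)
      = ∫ t in Iic x,
        (gaussPdf t + gaussPdf t * (1 - 2 * t ^ 2 - t ^ 4) / (1 + t ^ 2) ^ 2) := by
    rw [integral_add integrable_gaussPdf.integrableOn integrable_aux.integrableOn, hint]
    rfl
  have hpt : ∀ t : ℝ, gaussPdf t + gaussPdf t * (1 - 2 * t ^ 2 - t ^ 4) / (1 + t ^ 2) ^ 2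
      = 2 * gaussPdf t / (1 + t ^ 2) ^ 2 := by
    intro t
    have : (0:ℝ) < (1 + t ^ 2) ^ 2 := by positivity
    field_simp
    ring
  have hpos : 0 < gaussCdf x + x * gaussPdf x / (1 + x ^ 2) := by
    rw [key]
    refine integral_Iic_pos
      (integrable_gaussPdf.integrableOn.add integrable_aux.integrableOn)
      (fun t _ => ?_) (fun t _ => ?_) <;>
    · rw [hpt t]
      have := gaussPdf_pos t
      positivity
  have h1x : (0:ℝ) < 1 + x ^ 2 := by positivity
  have heq : (1 + x ^ 2) * (gaussCdf x + x * gaussPdf x / (1 + x ^ 2))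
      = (1 + x ^ 2) * gaussCdf x + x * gaussPdf x := by
    field_simp
  nlinarith [mul_pos h1x hpos]

lemma tendsto_gaussCdf_atBot : Tendsto gaussCdf atBot (𝓝 0) := by
  have hub : Tendsto (fun x : ℝ => -gaussPdf x / x) atBot (𝓝 0) := by
    have hinv : Tendsto (fun x : ℝ => x⁻¹) atBot (𝓝 0) := by
      have h0 : Tendsto (fun x : ℝ => x⁻¹) atTop (𝓝 0) := tendsto_inv_atTop_zero
      have h1 : Tendsto (fun x : ℝ => -x) atBot atTop := tendsto_neg_atBot_atTop
      have h := (h0.comp h1).neg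
      rw [neg_zero] at h
      exact h.congr fun x => by rw [Function.comp_apply, inv_neg, neg_neg]
    have h := tendsto_gaussPdf_atBot.neg.mul hinv
    simp only [neg_zero, zero_mul] at h
    exact h.congr fun x => by rw [div_eq_mul_inv]
  refine tendsto_of_tendsto_of_tendsto_of_le_of_le' tendsto_const_nhds hub ?_ ?_
  · filter_upwards with x using (gaussCdf_pos x).le
  · filter_upwards [eventually_lt_atBot (0:ℝ)] with x hx
    rw [le_div_iff_of_neg hx]
    have := mills1 x
    linarith

lemma hasDerivAt_millsF (x : ℝ) :
    HasDerivAt (fun y => gaussCdf y ^ 2 - gaussPdf y ^ 2 - y * gaussPdf y * gaussCdf y)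
      (gaussPdf x * ((1 + x ^ 2) * gaussCdf x + x * gaussPdf x)) x := by
  have hc := hasDerivAt_gaussCdf x
  have hp := hasDerivAt_gaussPdf x
  have h := ((hc.pow 2).sub (hp.pow 2)).sub
    (((hasDerivAt_id x).mul hp).mul hc)
  refine h.congr_deriv ?_
  simp only [Nat.cast_ofNat, pow_one, id_eq, Pi.mul_apply]
  ring

lemma millsF_tendsto :
    Tendsto (fun y => gaussCdf y ^ 2 - gaussPdf y ^ 2 - y * gaussPdf y * gaussCdf y)
      atBot (𝓝 0) := by
  have h1 := tendsto_gaussCdf_atBot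
  have h2 := tendsto_gaussPdf_atBot
  have h3 := tendsto_id_mul_gaussPdf_atBot
  have h := ((h1.mul h1).sub (h2.mul h2)).sub (h3.mul h1)
  simpa [sq] using h

lemma millsF_pos (x : ℝ) :
    0 < gaussCdf x ^ 2 - gaussPdf x ^ 2 - x * gaussPdf x * gaussCdf x := by
  have hmono : StrictMono
      (fun y => gaussCdf y ^ 2 - gaussPdf y ^ 2 - y * gaussPdf y * gaussCdf y) := by
    apply strictMono_of_deriv_pos
    intro y
    rw [(hasDerivAt_millsF y).deriv]
    exact mul_pos (gaussPdf_pos y) (mills2 y)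
  have h0 : 0 ≤ gaussCdf (x-1) ^ 2 - gaussPdf (x-1) ^ 2 - (x-1) * gaussPdf (x-1) * gaussCdf (x-1) := by
    refine le_of_tendsto millsF_tendsto ?_
    filter_upwards [eventually_le_atBot (x-1)] with z hz using hmono.monotone hz
  have h1 := hmono (show x - 1 < x by linarith)
  simp only at h1
  linarith

theorem stmt0 : ∀ x : ℝ, 0 < millsQ x ∧ millsQ x < 1 := by
  intro x
  have hφ := gaussPdf_pos x
  have hΦ := gaussCdf_pos x
  have h1 := mills1 x
  have hF := millsF_pos x
  constructor
  · have heq : millsQ x = gaussPdf x * (gaussPdf x + x * gaussCdf x) / gaussCdf x ^ 2 := by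
      unfold millsQ
      field_simp
    rw [heq]
    positivity
  · have heq : millsQ x = (gaussPdf x ^ 2 + x * gaussPdf x * gaussCdf x) / gaussCdf x ^ 2 := by
      unfold millsQ
      field_simp
    rw [heq, div_lt_one (by positivity)]
    linarith
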